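/- Let G be a graph with a homogeneous set H, let k = χ(G[H]) be the chromatic number of the subgraph induced by H, and let F be a graph whose vertex set is the disjoint union of V(G) − H and a k-element set K, such that: F induces the same graph as G on V(G) − H, K is a clique of F, and a vertex v ∈ V(G) − H is adjacent in F to the vertices of K if and only if v is adjacent in G to the vertices of H (in which case it is adjacent to all of K, otherwise to none). Then χ(G) = χ(F). -/

import Mathlib

open SimpleGraph

/-- The banner: a chordless 4-cycle 0-1-2-3-0 together with a fifth vertex 4
adjacent to exactly one vertex (vertex 0) of the cycle. -/
def banner : SimpleGraph (Fin 5) :=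
  SimpleGraph.fromRel (fun i j =>
    (i = 0 ∧ j = 1) ∨ (i = 1 ∧ j = 2) ∨ (i = 2 ∧ j = 3) ∨ (i = 3 ∧ j = 0) ∨ (i = 0 ∧ j = 4))

/-- A graph is banner-free if it has no induced subgraph isomorphic to the banner. -/
def BannerFree {V : Type*} (G : SimpleGraph V) : Prop := ¬ Nonempty (banner ↪g G)

/-- A graph is C5-free if it has no induced subgraph isomorphic to the chordless 5-cycle. -/
def C5Free {V : Type*} (G : SimpleGraph V) : Prop :=
  ¬ Nonempty (SimpleGraph.cycleGraph 5 ↪g G)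

/-- A graph is odd-hole-free if it has no induced chordless cycle of odd length `n ≥ 5`
(odd holes are the odd chordless cycles with at least four, hence at least five, vertices). -/
def OddHoleFree {V : Type*} (G : SimpleGraph V) : Prop :=
  ∀ n : ℕ, 5 ≤ n → Odd n → ¬ Nonempty (SimpleGraph.cycleGraph n ↪g G)

/-- `A` is an odd antihole of `G`: the subgraph induced by `A` is isomorphic to the
complement of a chordless cycle on an odd number `n ≥ 5` of vertices. -/
def IsOddAntihole {V : Type*} (G : SimpleGraph V) (A : Set V) : Prop :=
  ∃ n : ℕ, 5 ≤ n ∧ Odd n ∧ Nonempty ((SimpleGraph.cycleGraph n)ᶜ ≃g G.induce A)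

/-- `H` is a homogeneous set of `G`: `2 ≤ |H| < |V(G)|` and every vertex outside `H`
is adjacent to all vertices of `H` or to none of them. -/
def IsHomogeneous {V : Type*} (G : SimpleGraph V) (H : Set V) : Prop :=
  2 ≤ H.ncard ∧ H ≠ Set.univ ∧
    ∀ v ∉ H, (∀ h ∈ H, G.Adj v h) ∨ (∀ h ∈ H, ¬ G.Adj v h)

/-- A graph is perfect if every induced subgraph has chromatic number equal to
its clique number. -/
def IsPerfect {V : Type*} (G : SimpleGraph V) : Prop :=
  ∀ S : Set V, (G.induce S).chromaticNumber = ((G.induce S).cliqueNum : ℕ∞)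

/-- A graph is perfectly divisible if every induced subgraph `G[S]` contains a set `X`
of vertices meeting all largest cliques of `G[S]` and inducing a perfect graph. -/
def PerfectlyDivisible {V : Type*} (G : SimpleGraph V) : Prop :=
  ∀ S : Set V, ∃ X ⊆ S, IsPerfect (G.induce X) ∧
    ∀ t : Finset V, ↑t ⊆ S → G.IsNClique ((G.induce S).cliqueNum) t → ∃ x ∈ X, x ∈ t

/-- A graph is `k`-divisible if the vertex set of each of its induced subgraphs `G[S]`
having at least one edge can be partitioned into `k` sets, none of which contains a
clique of size `ω(G[S])`.  (A graph with no edges is trivially `k`-divisible.) -/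
def KDivisible {V : Type*} (G : SimpleGraph V) (k : ℕ) : Prop :=
  ∀ S : Set V, (∃ a ∈ S, ∃ b ∈ S, G.Adj a b) →
    ∃ P : Fin k → Set V, (∀ v ∈ S, ∃! i, v ∈ P i) ∧
      ∀ i, P i ⊆ S ∧ ¬ ∃ t : Finset V, ↑t ⊆ P i ∧ G.IsNClique ((G.induce S).cliqueNum) t

/-- The maximum total weight `α_w(G)` of a stable (independent) set of the weighted
graph `G`; stable sets of `G` are exactly the cliques of the complement of `G`. -/
noncomputable def alphaW {V : Type*} (G : SimpleGraph V) (w : V → ℤ) : ℤ :=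
  sSup {x : ℤ | ∃ s : Finset V, Gᶜ.IsClique (↑s : Set V) ∧ x = ∑ v ∈ s, w v}

/-- `C` is a clique cutset of the connected graph `G` if `C` is a clique and
deleting `C` from `G` leaves a disconnected graph. -/
def IsCliqueCutset {V : Type*} (G : SimpleGraph V) (C : Set V) : Prop :=
  G.Connected ∧ G.IsClique C ∧ ¬ (G.induce Cᶜ).Preconnected

/-- Let `G` be a graph with a homogeneous set `H`, let `k = χ(G[H])`, and let
`F` be the graph obtained from `G` by substituting a clique `K` on `k` vertices for `H`:
the vertex set of `F` is the disjoint union of `V(G) − H` and `K`, `F` agrees with `G` on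
`V(G) − H`, `K` is a clique of `F`, and a vertex `v ∈ V(G) − H` is adjacent in `F` to the
vertices of `K` iff `v` is adjacent in `G` to the vertices of `H`.
Then `χ(G) = χ(F)`. -/
theorem stmt_12 {V : Type*} [Fintype V] (G : SimpleGraph V)
    (H : Set V) (hH : IsHomogeneous G H)
    (k : ℕ) (hk : (G.induce H).chromaticNumber = (k : ℕ∞))
    (F : SimpleGraph (↥(Hᶜ) ⊕ Fin k))
    (hFout : ∀ u v : ↥(Hᶜ), F.Adj (Sum.inl u) (Sum.inl v) ↔ G.Adj ↑u ↑v)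
    (hFK : ∀ i j : Fin k, F.Adj (Sum.inr i) (Sum.inr j) ↔ i ≠ j)
    (hFcross : ∀ (v : ↥(Hᶜ)) (i : Fin k),
      F.Adj (Sum.inl v) (Sum.inr i) ↔ ∀ h ∈ H, G.Adj ↑v h) :
    G.chromaticNumber = F.chromaticNumber := by
  classical
  have hiff : ∀ n : ℕ, G.Colorable n ↔ F.Colorable n := by
    intro n
    constructor
    · rintro ⟨C⟩
      set S : Set (Fin n) := Set.range (fun h : H => C h.1) with hS
      haveI : Fintype S := Fintype.ofFinite S
      have hcol : (G.induce H).Colorable (Fintype.card S) :=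
        (SimpleGraph.Coloring.mk
          (fun h : H => (⟨C h.1, Set.mem_range_self h⟩ : S))
          (by
            intro a b hab hEq
            exact C.valid hab (congrArg Subtype.val hEq))).colorable
      have hk' : k ≤ Fintype.card S := by
        have h1 := hcol.chromaticNumber_le
        rw [hk] at h1
        exact_mod_cast h1
      obtain ⟨f⟩ : Nonempty (Fin k ↪ S) :=
        Function.Embedding.nonempty_of_card_le (by simpa using hk')
      refine ⟨SimpleGraph.Coloring.mk
        (Sum.elim (fun v : ↥(Hᶜ) => C v.1) (fun i => ((f i : S) : Fin n))) ?_⟩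
      rintro (u | i) (v | j) hadj
      · exact C.valid ((hFout u v).mp hadj)
      · obtain ⟨h, hh⟩ := (f j).2
        simp only [Sum.elim_inl, Sum.elim_inr]
        intro hEq
        have hadjG : G.Adj u.1 h.1 := (hFcross u j).mp hadj h.1 h.2
        exact C.valid hadjG (hEq.trans hh.symm)
      · obtain ⟨h, hh⟩ := (f i).2
        simp only [Sum.elim_inl, Sum.elim_inr]
        intro hEq
        have hadjG : G.Adj v.1 h.1 := (hFcross v i).mp hadj.symm h.1 h.2
        exact C.valid hadjG (hEq.symm.trans hh.symm)
      · simp only [Sum.elim_inr]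
        intro hEq
        exact (hFK i j).mp hadj (f.injective (Subtype.val_injective hEq))
    · rintro ⟨C⟩
      have hcolH : (G.induce H).Colorable k := by
        rw [← SimpleGraph.chromaticNumber_le_iff_colorable, hk]
      obtain ⟨D⟩ := hcolH
      refine ⟨SimpleGraph.Coloring.mk
        (fun v : V => if hv : v ∈ H then C (Sum.inr (D ⟨v, hv⟩))
          else C (Sum.inl ⟨v, hv⟩)) ?_⟩
      intro a b hab
      by_cases ha : a ∈ H <;> by_cases hb : b ∈ H
      · simp only [dif_pos ha, dif_pos hb]
        have hD : D ⟨a, ha⟩ ≠ D ⟨b, hb⟩ := D.valid (by simpa using hab)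
        exact C.valid ((hFK _ _).mpr hD)
      · simp only [dif_pos ha, dif_neg hb]
        have hall : ∀ h ∈ H, G.Adj b h := by
          rcases hH.2.2 b hb with h1 | h1
          · exact h1
          · exact absurd hab.symm (h1 a ha)
        have hF : F.Adj (Sum.inl ⟨b, hb⟩) (Sum.inr (D ⟨a, ha⟩)) :=
          (hFcross ⟨b, hb⟩ _).mpr hall
        exact C.valid hF.symm
      · simp only [dif_neg ha, dif_pos hb]
        have hall : ∀ h ∈ H, G.Adj a h := by
          rcases hH.2.2 a ha with h1 | h1
          · exact h1
          · exact absurd hab (h1 b hb)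
        exact C.valid ((hFcross ⟨a, ha⟩ _).mpr hall)
      · simp only [dif_neg ha, dif_neg hb]
        exact C.valid ((hFout ⟨a, ha⟩ ⟨b, hb⟩).mpr hab)
  have hset : setOf G.Colorable = setOf F.Colorable := Set.ext hiff
  rw [SimpleGraph.chromaticNumber, SimpleGraph.chromaticNumber,
    show G.Colorable = F.Colorable from funext fun n => propext (hiff n)]
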